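/- Let φ : (0,∞) → ℝ be twice continuously differentiable, let Ω = {(x,y,z) ∈ ℝ³ : z > 0, y > z·exp(x/z)} (the interior of the exponential cone), and define F : Ω → ℝ by F(x,y,z) = −log y − 2·log z + φ(t), where t = log(y/z) − x/z > 0. Then the Hessian of F satisfies det F''(x,y,z) = (1/(y² z⁴))·(2φ̈(t) − φ̇(t)² − 3φ̇(t)φ̈(t) + φ̇(t)³) for all (x,y,z) ∈ Ω. -/

import Mathlib

open Set Real

/-- The Hessian matrix of a function on ℝⁿ. -/
noncomputable def hessian {n : ℕ} (F : (Fin n → ℝ) → ℝ) (x : Fin n → ℝ) :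
    Matrix (Fin n) (Fin n) ℝ :=
  fun i j => fderiv ℝ (fun y => fderiv ℝ F y (Pi.single j 1)) x (Pi.single i 1)

set_option maxHeartbeats 2000000

noncomputable def PP (i : Fin 3) : (Fin 3 → ℝ) →L[ℝ] ℝ := ContinuousLinearMap.proj i

noncomputable def tt (w : Fin 3 → ℝ) : ℝ := Real.log (w 1) - Real.log (w 2) - w 0 * (w 2)⁻¹

def UU : Set (Fin 3 → ℝ) := {w | 0 < w 2 ∧ 0 < w 1 ∧ 0 < tt w}

lemma capply (i : Fin 3) : Continuous fun w : Fin 3 → ℝ => w i := continuous_apply i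

lemma hUopen : IsOpen UU := by
  have h1 : IsOpen {w : Fin 3 → ℝ | 0 < w 2 ∧ 0 < w 1} := by
    have h2 : IsOpen {w : Fin 3 → ℝ | 0 < w 2} :=
      isOpen_lt (continuous_const : Continuous fun _ : Fin 3 → ℝ => (0:ℝ)) (capply 2)
    have h3 : IsOpen {w : Fin 3 → ℝ | 0 < w 1} :=
      isOpen_lt (continuous_const : Continuous fun _ : Fin 3 → ℝ => (0:ℝ)) (capply 1)
    exact h2.inter h3
  have hc : ContinuousOn tt {w : Fin 3 → ℝ | 0 < w 2 ∧ 0 < w 1} :=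
    ((ContinuousOn.log (capply 1).continuousOn (fun w hw => hw.2.ne')).sub
      (ContinuousOn.log (capply 2).continuousOn (fun w hw => hw.1.ne'))).sub
      ((capply 0).continuousOn.mul
        (ContinuousOn.inv₀ (capply 2).continuousOn (fun w hw => hw.1.ne')))
  have := hc.isOpen_inter_preimage h1 (isOpen_Ioi (a := (0:ℝ)))
  convert this using 1
  ext w; constructor
  · rintro ⟨a, b, c⟩; exact ⟨⟨a, b⟩, c⟩
  · rintro ⟨⟨a, b⟩, c⟩; exact ⟨a, b, c⟩

lemma mem_UU {w : Fin 3 → ℝ} (hz : 0 < w 2) (h : w 2 * Real.exp (w 0 / w 2) < w 1) : w ∈ UU := by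
  have hy : 0 < w 1 := lt_trans (by positivity) h
  refine ⟨hz, hy, ?_⟩
  have hlt := Real.log_lt_log (by positivity) h
  rw [Real.log_mul hz.ne' (Real.exp_pos _).ne', Real.log_exp, div_eq_mul_inv] at hlt
  unfold tt; linarith

lemma hP (i : Fin 3) (w : Fin 3 → ℝ) : HasFDerivAt (fun v : Fin 3 → ℝ => v i) (PP i) w :=
  (PP i).hasFDerivAt

lemma hinv {w : Fin 3 → ℝ} (i : Fin 3) (h : w i ≠ 0) :
    HasFDerivAt (fun v : Fin 3 → ℝ => (v i)⁻¹) ((-((w i) ^ 2)⁻¹) • PP i) w :=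
  (hasDerivAt_inv h).comp_hasFDerivAt w (hP i w)

lemma hlog {w : Fin 3 → ℝ} (i : Fin 3) (h : w i ≠ 0) :
    HasFDerivAt (fun v : Fin 3 → ℝ => Real.log (v i)) ((w i)⁻¹ • PP i) w :=
  by have := (Real.hasDerivAt_log h).comp_hasFDerivAt w (hP i w); exact this

noncomputable def Lt (w : Fin 3 → ℝ) : (Fin 3 → ℝ) →L[ℝ] ℝ :=
  ((w 1)⁻¹ • PP 1 - (w 2)⁻¹ • PP 2) -
    (w 0 • ((-((w 2) ^ 2)⁻¹) • PP 2) + (w 2)⁻¹ • PP 0)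

lemma hLt {w : Fin 3 → ℝ} (hw : w ∈ UU) : HasFDerivAt tt (Lt w) w :=
  (((hlog 1 hw.2.1.ne').sub (hlog 2 hw.1.ne')).sub ((hP 0 w).mul (hinv 2 hw.1.ne')))

lemma Lt_apply (w : Fin 3 → ℝ) (i : Fin 3) :
    Lt w (Pi.single i 1) =
      ![-(w 2)⁻¹, (w 1)⁻¹, w 0 * ((w 2) ^ 2)⁻¹ - (w 2)⁻¹] i := by
  fin_cases i <;>
    simp [Lt, PP, Pi.single_apply] <;> ring

lemma hphi1 (φ : ℝ → ℝ) (hφ : ContDiffOn ℝ 2 φ (Set.Ioi 0)) {s : ℝ} (hs : 0 < s) :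
    HasDerivAt φ (deriv φ s) s :=
  ((hφ.contDiffAt (isOpen_Ioi.mem_nhds hs)).differentiableAt (by norm_num)).hasDerivAt

lemma hphi2' (φ : ℝ → ℝ) (hφ : ContDiffOn ℝ 2 φ (Set.Ioi 0)) :
    ContDiffOn ℝ 1 (deriv φ) (Set.Ioi 0) := by
  have h := hφ.derivWithin (uniqueDiffOn_Ioi 0) (by norm_num : (1:WithTop ℕ∞) + 1 ≤ 2)
  exact h.congr (fun x hx => (derivWithin_of_isOpen isOpen_Ioi hx).symm)

lemma hphi2 (φ : ℝ → ℝ) (hφ : ContDiffOn ℝ 2 φ (Set.Ioi 0)) {s : ℝ} (hs : 0 < s) :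
    HasDerivAt (deriv φ) (deriv (deriv φ) s) s :=
  (((hphi2' φ hφ).contDiffAt (isOpen_Ioi.mem_nhds hs)).differentiableAt (by norm_num)).hasDerivAt

noncomputable def LF (φ : ℝ → ℝ) (w : Fin 3 → ℝ) : (Fin 3 → ℝ) →L[ℝ] ℝ :=
  (-((w 1)⁻¹ • PP 1) - (2:ℝ) • ((w 2)⁻¹ • PP 2)) + deriv φ (tt w) • Lt w

lemma hO : IsOpen {w : Fin 3 → ℝ | 0 < w 2 ∧ 0 < w 1} := by
  have h2 : IsOpen {w : Fin 3 → ℝ | 0 < w 2} :=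
    isOpen_lt (continuous_const : Continuous fun _ : Fin 3 → ℝ => (0:ℝ)) (capply 2)
  have h3 : IsOpen {w : Fin 3 → ℝ | 0 < w 1} :=
    isOpen_lt (continuous_const : Continuous fun _ : Fin 3 → ℝ => (0:ℝ)) (capply 1)
  exact h2.inter h3

lemma hFd (φ : ℝ → ℝ) (hφ : ContDiffOn ℝ 2 φ (Set.Ioi 0)) (F : (Fin 3 → ℝ) → ℝ)
    (hF : ∀ v : Fin 3 → ℝ,
      F v = -Real.log (v 1) - 2 * Real.log (v 2) + φ (Real.log (v 1 / v 2) - v 0 / v 2))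
    {w : Fin 3 → ℝ} (hw : w ∈ UU) : HasFDerivAt F (LF φ w) w := by
  have h1 : HasFDerivAt (fun v : Fin 3 → ℝ => -Real.log (v 1) - 2 * Real.log (v 2) + φ (tt v))
      (LF φ w) w :=
    (((hlog 1 hw.2.1.ne').neg.sub ((hlog 2 hw.1.ne').const_mul 2)).add
      ((hphi1 φ hφ hw.2.2).comp_hasFDerivAt w (hLt hw)))
  apply h1.congr_of_eventuallyEq
  filter_upwards [hO.mem_nhds ⟨hw.1, hw.2.1⟩] with v hv
  rw [hF v, Real.log_div hv.2.ne' hv.1.ne', div_eq_mul_inv]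
  rfl

noncomputable def GG (φ : ℝ → ℝ) : Fin 3 → (Fin 3 → ℝ) → ℝ :=
  ![fun w : Fin 3 → ℝ => deriv φ (tt w) * (-(w 2)⁻¹),
    fun w => -(w 1)⁻¹ + deriv φ (tt w) * (w 1)⁻¹,
    fun w => -(2 * (w 2)⁻¹) + deriv φ (tt w) * (w 0 * ((w 2)⁻¹ * (w 2)⁻¹) - (w 2)⁻¹)]

lemma hgrad (φ : ℝ → ℝ) (hφ : ContDiffOn ℝ 2 φ (Set.Ioi 0)) (F : (Fin 3 → ℝ) → ℝ)
    (hF : ∀ v : Fin 3 → ℝ,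
      F v = -Real.log (v 1) - 2 * Real.log (v 2) + φ (Real.log (v 1 / v 2) - v 0 / v 2))
    {w : Fin 3 → ℝ} (hw : w ∈ UU) (j : Fin 3) :
    fderiv ℝ F w (Pi.single j 1) = GG φ j w := by
  rw [(hFd φ hφ F hF hw).fderiv]
  unfold GG
  fin_cases j <;>
    (simp only [LF, Lt, PP, ContinuousLinearMap.add_apply, ContinuousLinearMap.sub_apply,
      ContinuousLinearMap.neg_apply, ContinuousLinearMap.smul_apply,
      ContinuousLinearMap.proj_apply, smul_eq_mul, Pi.single_apply]
     norm_num [Fin.ext_iff, Pi.single_apply]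
     try ring
     try exact Or.inl trivial)

noncomputable def HM (p q x y z : ℝ) : Matrix (Fin 3) (Fin 3) ℝ :=
  Matrix.of
    ![![q * (z⁻¹)^2, -(q * (y⁻¹ * z⁻¹)), -(q * (x * (z⁻¹)^2 - z⁻¹) * z⁻¹) + p * (z⁻¹)^2],
      ![-(q * (y⁻¹ * z⁻¹)), (1 + q - p) * (y⁻¹)^2, q * (x * (z⁻¹)^2 - z⁻¹) * y⁻¹],
      ![-(q * (x * (z⁻¹)^2 - z⁻¹) * z⁻¹) + p * (z⁻¹)^2, q * (x * (z⁻¹)^2 - z⁻¹) * y⁻¹,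
        2*(z⁻¹)^2 + q*(x * (z⁻¹)^2 - z⁻¹)^2 + p*((z⁻¹)^2 - 2*x*(z⁻¹)^3)]]

lemma hhess (φ : ℝ → ℝ) (hφ : ContDiffOn ℝ 2 φ (Set.Ioi 0)) (F : (Fin 3 → ℝ) → ℝ)
    (hF : ∀ v : Fin 3 → ℝ,
      F v = -Real.log (v 1) - 2 * Real.log (v 2) + φ (Real.log (v 1 / v 2) - v 0 / v 2))
    {v : Fin 3 → ℝ} (hv : v ∈ UU) :
    hessian F v = HM (deriv φ (tt v)) (deriv (deriv φ) (tt v)) (v 0) (v 1) (v 2) := by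
  have hz := hv.1.ne'
  have hy := hv.2.1.ne'
  have hdφt : HasFDerivAt (fun w : Fin 3 → ℝ => deriv φ (tt w))
      (deriv (deriv φ) (tt v) • Lt v) v :=
    (hphi2 φ hφ hv.2.2).comp_hasFDerivAt v (hLt hv)
  have key : ∀ j : Fin 3, fderiv ℝ (GG φ j) v =
      ![deriv φ (tt v) • (-((-((v 2)^2)⁻¹) • PP 2)) +
          (-(v 2)⁻¹) • (deriv (deriv φ) (tt v) • Lt v),
        -((-((v 1)^2)⁻¹) • PP 1) + (deriv φ (tt v) • ((-((v 1)^2)⁻¹) • PP 1) +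
          (v 1)⁻¹ • (deriv (deriv φ) (tt v) • Lt v)),
        -((2:ℝ) • ((-((v 2)^2)⁻¹) • PP 2)) +
          (deriv φ (tt v) • ((v 0) • ((v 2)⁻¹ • ((-((v 2)^2)⁻¹) • PP 2) +
              (v 2)⁻¹ • ((-((v 2)^2)⁻¹) • PP 2)) + ((v 2)⁻¹ * (v 2)⁻¹) • PP 0 -
              (-((v 2)^2)⁻¹) • PP 2) +
            (v 0 * ((v 2)⁻¹ * (v 2)⁻¹) - (v 2)⁻¹) • (deriv (deriv φ) (tt v) • Lt v))] j := by
    intro j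
    fin_cases j
    · exact (hdφt.mul (hinv 2 hz).neg).fderiv
    · exact (((hinv 1 hy).neg).add (hdφt.mul (hinv 1 hy))).fderiv
    · exact ((((hinv 2 hz).const_mul 2).neg).add
        (hdφt.mul (((hP 0 v).mul ((hinv 2 hz).mul (hinv 2 hz))).sub (hinv 2 hz)))).fderiv
  ext i j
  have hev : (fun w => fderiv ℝ F w (Pi.single j 1)) =ᶠ[nhds v] GG φ j := by
    filter_upwards [hUopen.mem_nhds hv] with w hw
    exact hgrad φ hφ F hF hw j
  show fderiv ℝ (fun w => fderiv ℝ F w (Pi.single j 1)) v (Pi.single i 1) = _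
  rw [hev.fderiv_eq, key j]
  fin_cases i <;> fin_cases j <;>
    (simp only [Lt, PP, HM, ContinuousLinearMap.add_apply, ContinuousLinearMap.sub_apply,
      ContinuousLinearMap.neg_apply, ContinuousLinearMap.smul_apply,
      ContinuousLinearMap.proj_apply, smul_eq_mul, Pi.single_apply, Matrix.of_apply,
      Matrix.cons_val', Matrix.cons_val_zero, Matrix.cons_val_one, Matrix.head_cons,
      Matrix.head_fin_const, Matrix.empty_val', Matrix.cons_val_fin_one]
     norm_num [Fin.ext_iff, Pi.single_apply]
     try ring
     try exact Or.inl trivial)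

/-- determinant of the Hessian of the rotationally reduced potential on the
interior of the exponential cone. -/
theorem det_hessian_exp_cone_ansatz (φ : ℝ → ℝ) (hφ : ContDiffOn ℝ 2 φ (Set.Ioi 0))
    (F : (Fin 3 → ℝ) → ℝ)
    (hF : ∀ v : Fin 3 → ℝ,
      F v = -Real.log (v 1) - 2 * Real.log (v 2) + φ (Real.log (v 1 / v 2) - v 0 / v 2)) :
    ∀ v : Fin 3 → ℝ, 0 < v 2 → v 2 * Real.exp (v 0 / v 2) < v 1 →
      (hessian F v).det =
        1 / ((v 1)^2 * (v 2)^4) *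
          (2 * deriv (deriv φ) (Real.log (v 1 / v 2) - v 0 / v 2)
            - (deriv φ (Real.log (v 1 / v 2) - v 0 / v 2))^2
            - 3 * deriv φ (Real.log (v 1 / v 2) - v 0 / v 2)
                * deriv (deriv φ) (Real.log (v 1 / v 2) - v 0 / v 2)
            + (deriv φ (Real.log (v 1 / v 2) - v 0 / v 2))^3) := by
  intro v hz hlt
  have hv : v ∈ UU := mem_UU hz hlt
  have htv : tt v = Real.log (v 1 / v 2) - v 0 / v 2 := by
    unfold tt
    rw [Real.log_div hv.2.1.ne' hz.ne', div_eq_mul_inv]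
  rw [hhess φ hφ F hF hv, Matrix.det_fin_three, ← htv]
  simp only [HM, Matrix.of_apply, Matrix.cons_val', Matrix.cons_val_zero, Matrix.cons_val_one,
    Matrix.head_cons, Matrix.head_fin_const, Matrix.empty_val', Matrix.cons_val_fin_one,
    Matrix.cons_val_two, Matrix.tail_cons]
  have h1 : v 1 ≠ 0 := hv.2.1.ne'
  have h2 : v 2 ≠ 0 := hz.ne'
  field_simp
  ring
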